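/- Let $a_1, a_2, c > 0$ and $b_1, b_2 \in \mathbb{R}$ with $b_1 < 0$ and $\frac{b_1^2}{a_1^2} + \frac{b_2^2}{a_2^2} > c^2$. Then the equation $b_1^2 (a_2 + 2\lambda)^2 + b_2^2 (a_1 + 2\lambda)^2 = c^2 (a_1 + 2\lambda)^2 (a_2 + 2\lambda)^2$ in the real variable $\lambda$ has exactly one solution with $\lambda > 0$. -/

import Mathlib

theorem stmt_11 (a₁ a₂ c b₁ b₂ : ℝ) (ha₁ : 0 < a₁) (ha₂ : 0 < a₂) (hc : 0 < c)
    (hb₁ : b₁ < 0) (hout : b₁ ^ 2 / a₁ ^ 2 + b₂ ^ 2 / a₂ ^ 2 > c ^ 2) :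
    ∃! lam : ℝ, 0 < lam ∧
      b₁ ^ 2 * (a₂ + 2 * lam) ^ 2 + b₂ ^ 2 * (a₁ + 2 * lam) ^ 2 =
        c ^ 2 * (a₁ + 2 * lam) ^ 2 * (a₂ + 2 * lam) ^ 2 := by
  have hb1ne : b₁ ≠ 0 := ne_of_lt hb₁
  have hb1sq : 0 < b₁ ^ 2 := by positivity
  set g : ℝ → ℝ := fun l => b₁ ^ 2 / (a₁ + 2 * l) ^ 2 + b₂ ^ 2 / (a₂ + 2 * l) ^ 2 with hg
  -- equivalence of equations for positive lam
  have key : ∀ l : ℝ, 0 < l →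
      ((b₁ ^ 2 * (a₂ + 2 * l) ^ 2 + b₂ ^ 2 * (a₁ + 2 * l) ^ 2 =
        c ^ 2 * (a₁ + 2 * l) ^ 2 * (a₂ + 2 * l) ^ 2) ↔ g l = c ^ 2) := by
    intro l hl
    have h1 : a₁ + 2 * l ≠ 0 := by positivity
    have h2 : a₂ + 2 * l ≠ 0 := by positivity
    simp only [hg]
    rw [div_add_div _ _ (by positivity) (by positivity), div_eq_iff (by positivity)]
    constructor <;> intro h <;> nlinarith [h]
  -- strict anti
  have hanti : StrictAntiOn g (Set.Ici (0:ℝ)) := by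
    intro x hx y hy hxy
    simp only [Set.mem_Ici] at hx hy
    have h1x : 0 < a₁ + 2 * x := by linarith
    have h2x : 0 < a₂ + 2 * x := by linarith
    have hsq1 : (a₁ + 2 * x) ^ 2 < (a₁ + 2 * y) ^ 2 := by nlinarith
    have hsq2 : (a₂ + 2 * x) ^ 2 < (a₂ + 2 * y) ^ 2 := by nlinarith
    have t1 : b₁ ^ 2 / (a₁ + 2 * y) ^ 2 < b₁ ^ 2 / (a₁ + 2 * x) ^ 2 :=
      div_lt_div_of_pos_left hb1sq (by positivity) hsq1
    have t2 : b₂ ^ 2 / (a₂ + 2 * y) ^ 2 ≤ b₂ ^ 2 / (a₂ + 2 * x) ^ 2 :=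
      div_le_div_of_nonneg_left (by positivity) (by positivity) (le_of_lt hsq2)
    simp only [hg]
    linarith
  have hg0 : c ^ 2 < g 0 := by
    simp only [hg]
    norm_num
    exact hout
  obtain ⟨lam₀, hlam₀pos, hclam⟩ : ∃ L : ℝ, 0 < L ∧ c * L = |b₁| + |b₂| + 1 :=
    ⟨(|b₁| + |b₂| + 1) / c, by positivity, by field_simp⟩
  have hgl : g lam₀ < c ^ 2 := by
    have e1 : b₁ ^ 2 / (a₁ + 2 * lam₀) ^ 2 ≤ b₁ ^ 2 / (2 * lam₀) ^ 2 :=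
      div_le_div_of_nonneg_left (by positivity) (by positivity) (by nlinarith)
    have e2 : b₂ ^ 2 / (a₂ + 2 * lam₀) ^ 2 ≤ b₂ ^ 2 / (2 * lam₀) ^ 2 :=
      div_le_div_of_nonneg_left (by positivity) (by positivity) (by nlinarith)
    have e3 : b₁ ^ 2 / (2 * lam₀) ^ 2 + b₂ ^ 2 / (2 * lam₀) ^ 2 < c ^ 2 := by
      rw [← add_div, div_lt_iff₀ (by positivity)]
      have h4 : c ^ 2 * (2 * lam₀) ^ 2 = 4 * (|b₁| + |b₂| + 1) ^ 2 := by
        rw [← hclam]; ring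
      nlinarith [abs_nonneg b₁, abs_nonneg b₂, sq_abs b₁, sq_abs b₂, h4]
    simp only [hg]
    linarith
  have hcont : ContinuousOn g (Set.Icc 0 lam₀) := by
    have c1 : Continuous fun l : ℝ => (a₁ + 2 * l) ^ 2 :=
      (continuous_const.add (continuous_const.mul continuous_id)).pow 2
    have c2 : Continuous fun l : ℝ => (a₂ + 2 * l) ^ 2 :=
      (continuous_const.add (continuous_const.mul continuous_id)).pow 2
    apply ContinuousOn.add
    · apply ContinuousOn.div continuousOn_const c1.continuousOn
      intro x hx
      have := hx.1
      positivity
    · apply ContinuousOn.div continuousOn_const c2.continuousOn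
      intro x hx
      have := hx.1
      positivity
  obtain ⟨x, hx, hgx⟩ :=
    intermediate_value_Icc' (le_of_lt hlam₀pos) hcont ⟨hgl.le, hg0.le⟩
  have hxpos : 0 < x := by
    rcases hx.1.lt_or_eq with h | h
    · exact h
    · exfalso; rw [← h] at hgx; linarith
  refine ⟨x, ⟨hxpos, (key x hxpos).mpr hgx⟩, ?_⟩
  rintro y ⟨hypos, hyeq⟩
  have hgy : g y = c ^ 2 := (key y hypos).mp hyeq
  rcases lt_trichotomy y x with h | h | h
  · exfalso
    have := hanti (le_of_lt hypos) (le_of_lt hxpos) h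
    rw [hgx, hgy] at this; exact lt_irrefl _ this
  · exact h
  · exfalso
    have := hanti (le_of_lt hxpos) (le_of_lt hypos) h
    rw [hgx, hgy] at this; exact lt_irrefl _ this
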